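/- Let A be a real matrix with L = λ_max(AᵀA), μ = λ_min(AᵀA). Suppose R : ℝ^n → ℝ^n and S : ℝ^m → ℝ^m are differentiable, R - I is ε₁-Lipschitz, and S - I is ε₂-Lipschitz. Define f(u) = u - η(AᵀS(Au) + R(u)) with 0 < η < 1/(L+1). Then ‖f(u) - f(u')‖ ≤ γ‖u - u'‖ for all u, u', where γ = 1 - η(1+μ) + η(Lε₂ + ε₁). In particular, if ε₁ + Lε₂ < 1 + μ, then f is a contraction and its fixed-point iterates converge. -/

import Mathlib

open Matrix

/-- Matrix–vector multiplication viewed as a map between Euclidean spaces. -/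
noncomputable def mvE {m n : ℕ} (A : Matrix (Fin m) (Fin n) ℝ)
    (u : EuclideanSpace ℝ (Fin n)) : EuclideanSpace ℝ (Fin m) :=
  (WithLp.equiv 2 (Fin m → ℝ)).symm (A.mulVec (WithLp.equiv 2 (Fin n → ℝ) u))

open RealInnerProductSpace
variable {m n : ℕ} (A : Matrix (Fin m) (Fin n) ℝ)

lemma mvE_sub (x y : EuclideanSpace ℝ (Fin n)) : mvE A (x - y) = mvE A x - mvE A y := by
  ext j; simp [mvE, Matrix.mulVec_sub]

lemma mvE_add (x y : EuclideanSpace ℝ (Fin n)) : mvE A (x + y) = mvE A x + mvE A y := by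
  ext j; simp [mvE, Matrix.mulVec_add]

lemma mvE_mvE {k : ℕ} (B : Matrix (Fin k) (Fin m) ℝ) (x : EuclideanSpace ℝ (Fin n)) :
    mvE B (mvE A x) = mvE (B * A) x := by
  ext j; simp [mvE, Matrix.mulVec_mulVec]

lemma inner_mvE (x : EuclideanSpace ℝ (Fin n)) (y : EuclideanSpace ℝ (Fin m)) :
    ⟪mvE A x, y⟫ = ⟪x, mvE Aᵀ y⟫ := by
  simp only [EuclideanSpace.inner_eq_star_dotProduct]
  simp [mvE, Matrix.dotProduct_mulVec, Matrix.mulVec_transpose, dotProduct_comm]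

variable (hH : (Aᵀ * A).IsHermitian)

lemma mvE_eigen (i : Fin n) :
    mvE (Aᵀ * A) (hH.eigenvectorBasis i) = hH.eigenvalues i • hH.eigenvectorBasis i := by
  have h := hH.mulVec_eigenvectorBasis i
  ext j
  have := congrFun h j
  simpa [mvE] using this

lemma transpose_H : (Aᵀ * A)ᵀ = Aᵀ * A := by
  rw [Matrix.transpose_mul, Matrix.transpose_transpose]

lemma inner_bi (i : Fin n) (x : EuclideanSpace ℝ (Fin n)) :
    ⟪hH.eigenvectorBasis i, mvE (Aᵀ * A) x⟫ = hH.eigenvalues i * ⟪hH.eigenvectorBasis i, x⟫ := by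
  rw [real_inner_comm, inner_mvE, transpose_H A, mvE_eigen A hH, real_inner_smul_right,
    real_inner_comm]

lemma inner_quad (x : EuclideanSpace ℝ (Fin n)) :
    ⟪x, mvE (Aᵀ * A) x⟫ = ‖mvE A x‖ ^ 2 := by
  rw [← mvE_mvE, ← inner_mvE, real_inner_self_eq_norm_sq]

lemma eig_eq (i : Fin n) : hH.eigenvalues i = ‖mvE A (hH.eigenvectorBasis i)‖ ^ 2 := by
  have h1 := inner_bi A hH i (hH.eigenvectorBasis i)
  have h2 : ⟪hH.eigenvectorBasis i, hH.eigenvectorBasis i⟫ = (1:ℝ) := by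
    rw [real_inner_self_eq_norm_sq, hH.eigenvectorBasis.orthonormal.1 i]; norm_num
  rw [inner_quad, h2, mul_one] at h1
  exact h1.symm

lemma eig_nonneg (i : Fin n) : 0 ≤ hH.eigenvalues i := by
  rw [eig_eq A hH]; positivity

lemma expand_inner (x y : EuclideanSpace ℝ (Fin n)) :
    ⟪x, y⟫ = ∑ i, ⟪hH.eigenvectorBasis i, x⟫ * ⟪hH.eigenvectorBasis i, y⟫ := by
  rw [← hH.eigenvectorBasis.sum_inner_mul_inner x y]
  congr 1; ext i; rw [real_inner_comm]

lemma sqrt_le_helper {a b : ℝ} (ha : 0 ≤ a) (hb : 0 ≤ b) (h : a ^ 2 ≤ b ^ 2) : a ≤ b := by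
  rw [← Real.sqrt_sq ha, ← Real.sqrt_sq hb]; exact Real.sqrt_le_sqrt h

lemma normx_sq (x : EuclideanSpace ℝ (Fin n)) :
    ‖x‖ ^ 2 = ∑ i, ⟪hH.eigenvectorBasis i, x⟫ ^ 2 := by
  rw [← real_inner_self_eq_norm_sq, expand_inner A hH]
  congr 1; ext i; ring

lemma quad_le {L : ℝ} (hup : ∀ i, hH.eigenvalues i ≤ L) (x : EuclideanSpace ℝ (Fin n)) :
    ‖mvE A x‖ ^ 2 ≤ L * ‖x‖ ^ 2 := by
  rw [← inner_quad A, expand_inner A hH, normx_sq A hH, Finset.mul_sum]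
  apply Finset.sum_le_sum
  intro i _
  have h1 := inner_bi A hH i x
  rw [h1]
  have h2 : hH.eigenvalues i * ⟪hH.eigenvectorBasis i, x⟫ ^ 2 ≤ L * ⟪hH.eigenvectorBasis i, x⟫ ^ 2 :=
    mul_le_mul_of_nonneg_right (hup i) (sq_nonneg _)
  nlinarith [sq_nonneg (⟪hH.eigenvectorBasis i, x⟫ : ℝ)]

lemma normA_le {L : ℝ} (hL0 : 0 ≤ L) (hup : ∀ i, hH.eigenvalues i ≤ L)
    (x : EuclideanSpace ℝ (Fin n)) : ‖mvE A x‖ ≤ Real.sqrt L * ‖x‖ := by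
  apply sqrt_le_helper (norm_nonneg _) (by positivity)
  calc ‖mvE A x‖ ^ 2 ≤ L * ‖x‖ ^ 2 := quad_le A hH hup x
    _ = (Real.sqrt L * ‖x‖) ^ 2 := by rw [mul_pow, Real.sq_sqrt hL0]

lemma normAT_le {L : ℝ} (hL0 : 0 ≤ L) (hup : ∀ i, hH.eigenvalues i ≤ L)
    (w : EuclideanSpace ℝ (Fin m)) : ‖mvE Aᵀ w‖ ≤ Real.sqrt L * ‖w‖ := by
  set a := ‖mvE Aᵀ w‖ with ha
  rcases eq_or_lt_of_le (norm_nonneg (mvE Aᵀ w)) with h0 | h0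
  · rw [ha, ← h0]; positivity
  · have h1 : a ^ 2 = ⟪w, mvE A (mvE Aᵀ w)⟫ := by
      rw [← real_inner_self_eq_norm_sq, real_inner_comm]
      rw [inner_mvE Aᵀ w (mvE Aᵀ w), Matrix.transpose_transpose]
    have h2 : ⟪w, mvE A (mvE Aᵀ w)⟫ ≤ ‖w‖ * ‖mvE A (mvE Aᵀ w)‖ := real_inner_le_norm _ _
    have h3 : ‖mvE A (mvE Aᵀ w)‖ ≤ Real.sqrt L * a := normA_le A hH hL0 hup _
    have h4 : a * a ≤ (Real.sqrt L * ‖w‖) * a := by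
      nlinarith [norm_nonneg w, Real.sqrt_nonneg L]
    exact le_of_mul_le_mul_right h4 h0

lemma T_bound {L μ η : ℝ} (hlow : ∀ i, μ ≤ hH.eigenvalues i) (hup : ∀ i, hH.eigenvalues i ≤ L)
    (hη0 : 0 < η) (hηL : η * (L + 1) ≤ 1) (hc0 : 0 ≤ 1 - η * (1 + μ))
    (x : EuclideanSpace ℝ (Fin n)) :
    ‖x - η • (mvE (Aᵀ * A) x + x)‖ ≤ (1 - η * (1 + μ)) * ‖x‖ := by
  apply sqrt_le_helper (norm_nonneg _) (by positivity)
  have hrepr : ∀ i, ⟪hH.eigenvectorBasis i, x - η • (mvE (Aᵀ * A) x + x)⟫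
      = (1 - η * (1 + hH.eigenvalues i)) * ⟪hH.eigenvectorBasis i, x⟫ := by
    intro i
    rw [inner_sub_right, real_inner_smul_right, inner_add_right, inner_bi A hH i x]
    ring
  rw [normx_sq A hH, mul_pow, normx_sq A hH x, Finset.mul_sum]
  apply Finset.sum_le_sum
  intro i _
  rw [hrepr i, mul_pow]
  have h1 : 0 ≤ 1 - η * (1 + hH.eigenvalues i) := by nlinarith [hup i]
  have h2 : 1 - η * (1 + hH.eigenvalues i) ≤ 1 - η * (1 + μ) := by nlinarith [hlow i]
  exact mul_le_mul_of_nonneg_right (pow_le_pow_left₀ h1 h2 2) (sq_nonneg _)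

/-- Theorem 2 (convergence of LRPE with learned data fidelity):
with `f(u) = u - η(AᵀS(Au) + R(u))`, `f` is `γ`-Lipschitz with
`γ = 1 - η(1+μ) + η(Lε₂ + ε₁)`; if `ε₁ + Lε₂ < 1 + μ` it is a contraction
and its fixed-point iterates converge. -/
theorem lrpe_learned_fidelity_contraction {m n : ℕ}
    (A : Matrix (Fin m) (Fin n) ℝ)
    (hH : (Aᵀ * A).IsHermitian) (L μ ε₁ ε₂ η : ℝ)
    (hL : L = ⨆ i, hH.eigenvalues i) (hμ : μ = ⨅ i, hH.eigenvalues i)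
    (R : EuclideanSpace ℝ (Fin n) → EuclideanSpace ℝ (Fin n))
    (S : EuclideanSpace ℝ (Fin m) → EuclideanSpace ℝ (Fin m))
    (hR : Differentiable ℝ R) (hS : Differentiable ℝ S)
    (hRLip : ∀ u u' : EuclideanSpace ℝ (Fin n),
      ‖(R u - u) - (R u' - u')‖ ≤ ε₁ * ‖u - u'‖)
    (hSLip : ∀ v v' : EuclideanSpace ℝ (Fin m),
      ‖(S v - v) - (S v' - v')‖ ≤ ε₂ * ‖v - v'‖)
    (hη0 : 0 < η) (hη1 : η < 1 / (L + 1))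
    (f : EuclideanSpace ℝ (Fin n) → EuclideanSpace ℝ (Fin n))
    (hf : ∀ u, f u = u - η • (mvE Aᵀ (S (mvE A u)) + R u)) :
    (∀ u u', ‖f u - f u'‖ ≤ (1 - η * (1 + μ) + η * (L * ε₂ + ε₁)) * ‖u - u'‖) ∧
      (ε₁ + L * ε₂ < 1 + μ →
        (1 - η * (1 + μ) + η * (L * ε₂ + ε₁) < 1) ∧
        ∃ ustar, f ustar = ustar ∧ (∀ v, f v = v → v = ustar) ∧
          ∀ u0, Filter.Tendsto (fun k => f^[k] u0) Filter.atTop (nhds ustar)) := by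
  set γ : ℝ := 1 - η * (1 + μ) + η * (L * ε₂ + ε₁) with hγ
  have part1 : ∀ u u', ‖f u - f u'‖ ≤ γ * ‖u - u'‖ := by
    intro u u'
    rcases Nat.eq_zero_or_pos n with hn | hn
    · have huu : u = u' := by ext j; exact absurd j.isLt (by omega)
      simp [huu]
    · haveI : Nonempty (Fin n) := ⟨⟨0, hn⟩⟩
      have hup : ∀ i, hH.eigenvalues i ≤ L := fun i =>
        hL ▸ le_ciSup (Set.Finite.bddAbove (Set.finite_range _)) i
      have hlow : ∀ i, μ ≤ hH.eigenvalues i := fun i =>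
        hμ ▸ ciInf_le (Set.Finite.bddBelow (Set.finite_range _)) i
      have hL0 : 0 ≤ L := le_trans (eig_nonneg A hH (Classical.arbitrary _)) (hup _)
      have hL1 : (0:ℝ) < L + 1 := by linarith
      have hηL : η * (L + 1) < 1 := (lt_div_iff₀ hL1).1 hη1
      have hμL : μ ≤ L := le_trans (hlow (Classical.arbitrary _)) (hup _)
      have hc0 : 0 ≤ 1 - η * (1 + μ) := by nlinarith
      set d := u - u' with hd
      set ΔS := (S (mvE A u) - mvE A u) - (S (mvE A u') - mvE A u') with hΔS
      set ΔR := (R u - u) - (R u' - u') with hΔR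
      have hAd : mvE A u - mvE A u' = mvE A d := (mvE_sub A u u').symm
      have hdecomp : f u - f u' = (d - η • (mvE (Aᵀ * A) d + d)) - η • mvE Aᵀ ΔS - η • ΔR := by
        rw [hf u, hf u']
        have e0 : S (mvE A u) - S (mvE A u') = ΔS + mvE A d := by rw [hΔS, ← hAd]; abel
        have e1 : mvE Aᵀ (S (mvE A u))
            = mvE Aᵀ (S (mvE A u')) + (mvE Aᵀ ΔS + mvE (Aᵀ * A) d) := by
          have e0' : S (mvE A u) = S (mvE A u') + (ΔS + mvE A d) := by rw [← e0]; abel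
          rw [← mvE_mvE A Aᵀ d, ← mvE_add, ← mvE_add, ← e0']
        have e2 : R u = R u' + (ΔR + d) := by rw [hΔR, hd]; abel
        rw [e1, e2, hd]
        module
      have htri : ‖f u - f u'‖
          ≤ ‖d - η • (mvE (Aᵀ * A) d + d)‖ + ‖η • mvE Aᵀ ΔS‖ + ‖η • ΔR‖ := by
        rw [hdecomp]
        refine le_trans (norm_sub_le _ _) ?_
        exact add_le_add_left (norm_sub_le _ _) _
      have hT := T_bound A hH hlow hup hη0 (le_of_lt hηL) hc0 d
      have hR' : ‖ΔR‖ ≤ ε₁ * ‖d‖ := hRLip u u'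
      have hS' : ‖ΔS‖ ≤ ε₂ * ‖mvE A d‖ := by
        have h := hSLip (mvE A u) (mvE A u'); rwa [hAd] at h
      have hsm1 : ‖η • mvE Aᵀ ΔS‖ = η * ‖mvE Aᵀ ΔS‖ := by
        rw [norm_smul, Real.norm_eq_abs, abs_of_pos hη0]
      have hsm2 : ‖η • ΔR‖ = η * ‖ΔR‖ := by
        rw [norm_smul, Real.norm_eq_abs, abs_of_pos hη0]
      rcases le_or_gt 0 ε₂ with hε₂ | hε₂
      · have hmid : ‖mvE Aᵀ ΔS‖ ≤ L * (ε₂ * ‖d‖) := by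
          calc ‖mvE Aᵀ ΔS‖ ≤ Real.sqrt L * ‖ΔS‖ := normAT_le A hH hL0 hup ΔS
            _ ≤ Real.sqrt L * (ε₂ * ‖mvE A d‖) :=
                mul_le_mul_of_nonneg_left hS' (Real.sqrt_nonneg L)
            _ ≤ Real.sqrt L * (ε₂ * (Real.sqrt L * ‖d‖)) :=
                mul_le_mul_of_nonneg_left
                  (mul_le_mul_of_nonneg_left (normA_le A hH hL0 hup d) hε₂) (Real.sqrt_nonneg L)
            _ = (Real.sqrt L * Real.sqrt L) * (ε₂ * ‖d‖) := by ring
            _ = L * (ε₂ * ‖d‖) := by rw [Real.mul_self_sqrt hL0]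
        have h1 : ‖η • mvE Aᵀ ΔS‖ ≤ η * (L * (ε₂ * ‖d‖)) := by
          rw [hsm1]; exact mul_le_mul_of_nonneg_left hmid hη0.le
        have h2 : ‖η • ΔR‖ ≤ η * (ε₁ * ‖d‖) := by
          rw [hsm2]; exact mul_le_mul_of_nonneg_left hR' hη0.le
        have hfinal : (1 - η * (1 + μ)) * ‖d‖ + η * (L * (ε₂ * ‖d‖)) + η * (ε₁ * ‖d‖)
            = γ * ‖d‖ := by rw [hγ]; ring
        linarith
      · have hm0 : m = 0 := by
          by_contra hm
          haveI : Nonempty (Fin m) := ⟨⟨0, Nat.pos_of_ne_zero hm⟩⟩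
          set v : EuclideanSpace ℝ (Fin m) :=
            EuclideanSpace.single (Classical.arbitrary (Fin m)) (1:ℝ) with hv
          have h := hSLip v 0
          have hv1 : ‖v - 0‖ = 1 := by
            rw [sub_zero, hv, EuclideanSpace.norm_single, norm_one]
          rw [hv1, mul_one] at h
          have := norm_nonneg ((S v - v) - (S 0 - 0))
          linarith
        have hΔS0 : ΔS = 0 := by
          ext j; exact absurd j.isLt (by omega)
        have hAS0 : mvE Aᵀ ΔS = 0 := by
          rw [hΔS0]; ext j; simp [mvE]
        have hLz : L = 0 := by
          rw [hL]
          have he : ∀ i, hH.eigenvalues i = 0 := by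
            intro i
            have hz : mvE A (hH.eigenvectorBasis i) = 0 := by
              ext j
              exact absurd j.isLt (by omega)
            rw [eig_eq A hH i, hz, norm_zero]; ring
          simp [he]
        have h1 : ‖η • mvE Aᵀ ΔS‖ = 0 := by rw [hAS0, smul_zero, norm_zero]
        have h2 : ‖η • ΔR‖ ≤ η * (ε₁ * ‖d‖) := by
          rw [hsm2]; exact mul_le_mul_of_nonneg_left hR' hη0.le
        have hfinal : (1 - η * (1 + μ)) * ‖d‖ + 0 + η * (ε₁ * ‖d‖) = γ * ‖d‖ := by
          rw [hγ, hLz]; ring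
        linarith
  refine ⟨part1, fun hcond => ?_⟩
  have γlt : γ < 1 := by rw [hγ]; nlinarith
  refine ⟨γlt, ?_⟩
  set K : NNReal := ⟨max γ 0, le_max_right _ _⟩ with hK
  have hlip : LipschitzWith K f := by
    apply LipschitzWith.of_dist_le_mul
    intro x y
    rw [dist_eq_norm, dist_eq_norm]
    calc ‖f x - f y‖ ≤ γ * ‖x - y‖ := part1 x y
      _ ≤ max γ 0 * ‖x - y‖ := mul_le_mul_of_nonneg_right (le_max_left _ _) (norm_nonneg _)
      _ = (K : ℝ) * ‖x - y‖ := rfl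
  have hC : ContractingWith K f := by
    constructor
    · have : (K : ℝ) < 1 := max_lt γlt one_pos
      exact_mod_cast this
    · exact hlip
  exact ⟨ContractingWith.fixedPoint f hC, hC.fixedPoint_isFixedPt,
    fun v hv => hC.fixedPoint_unique hv,
    fun u0 => hC.tendsto_iterate_fixedPoint u0⟩
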